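/- arXiv:2506.06125 — 2 statements merged into one kernel-verified Lean document; each statement's English description precedes it below -/
import Mathlib

section
/- The DLR hierarchy is monotone: if Λ ⊆ Λ' ⊆ V and ν' ∈ LP_{Λ',DLR}, then the marginal of ν' on Σ^{Λ̄} belongs to LP_{Λ,DLR}. Consequently, for every f supported on Λ, min{ν'(f) : ν' ∈ LP_{Λ',DLR}} ≥ min{ν(f) : ν ∈ LP_{Λ,DLR}} and max{ν'(f) : ν' ∈ LP_{Λ',DLR}} ≤ max{ν(f) : ν ∈ LP_{Λ,DLR}}. -/
namespace GibbsLP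

variable {V : Type*} [Fintype V] [DecidableEq V]

/-- Spin configurations on the vertex set `V`; the two spin values `-1, +1` are
encoded by the two-element type `Bool`. -/
abbrev Config (V : Type*) := V → Bool

/-- The configuration `x` with the spin at site `i` flipped (denoted `xⁱ` in the paper). -/
def flip (x : Config V) (i : V) : Config V := Function.update x i (!x i)

/-- Discrete gradient `∇ᵢ f (x) = f(xⁱ) - f(x)`. -/
def grad (f : Config V → ℝ) (i : V) (x : Config V) : ℝ := f (flip x i) - f x

/-- `f` depends only on the spins in `Λ`, i.e. `supp f ⊆ Λ`. -/
def SupportedOn (f : Config V → ℝ) (Λ : Set V) : Prop :=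
  ∀ i ∉ Λ, ∀ x, f (flip x i) = f x

/-- The support `supp f = {i : ∇ᵢ f ≠ 0}` of an observable. -/
def sptSet (f : Config V → ℝ) : Set V := {i | ∃ x, f (flip x i) ≠ f x}

/-- Sup norm of an observable. -/
noncomputable def supNorm {α : Type*} (f : α → ℝ) : ℝ := ⨆ x, |f x|

/-- The Hamiltonian `H(x) = β ∑_{{i,j} ∈ E} h_{ij}(x_i, x_j)`; each unordered edge is
counted once (hence the factor `1/2` for the ordered double sum). -/
noncomputable def ham (G : SimpleGraph V) [DecidableRel G.Adj] (β : ℝ)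
    (h : V → V → Bool → Bool → ℝ) (x : Config V) : ℝ :=
  β * ((1 : ℝ) / 2 * ∑ i : V, ∑ j : V, if G.Adj i j then h i j (x i) (x j) else 0)

/-- The Gibbs distribution `μ(x) = e^{-H(x)} / Z`. -/
noncomputable def gibbs (H : Config V → ℝ) (x : Config V) : ℝ :=
  Real.exp (-H x) / ∑ y : Config V, Real.exp (-H y)

/-- `ν` is a probability distribution. -/
def IsDist {α : Type*} [Fintype α] (ν : α → ℝ) : Prop :=
  (∀ a, 0 ≤ ν a) ∧ ∑ a, ν a = 1

/-- Spin configurations on a subset `A ⊆ V`. -/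
abbrev SubConfig {V : Type*} (A : Finset V) := {i : V // i ∈ A} → Bool

/-- Restriction of a configuration to `A`. -/
def restrict (A : Finset V) (x : Config V) : SubConfig A := fun i => x i.1

/-- Extension of a configuration on `A` to all of `V` (by an arbitrary fixed value outside). -/
def extendC (A : Finset V) (y : SubConfig A) : Config V :=
  fun i => if h : i ∈ A then y ⟨i, h⟩ else true

/-- Flip the spin of `y : SubConfig A` at site `i` (identity if `i ∉ A`). -/
def flipAt (A : Finset V) (y : SubConfig A) (i : V) : SubConfig A :=
  fun j => if j.1 = i then !(y j) else y j

/-- External boundary `∂ᵉˣ Λ = {j ∉ Λ : ∃ i ∈ Λ, {i,j} ∈ E}`. -/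
def extBoundary (G : SimpleGraph V) [DecidableRel G.Adj] (Λ : Finset V) : Finset V :=
  Finset.univ.filter fun j => j ∉ Λ ∧ ∃ i ∈ Λ, G.Adj i j

/-- External boundary of a set of vertices (set version). -/
def extBoundarySet (G : SimpleGraph V) (A : Set V) : Set V :=
  {j | j ∉ A ∧ ∃ i ∈ A, G.Adj i j}

/-- `Λ̄ = Λ ∪ ∂ᵉˣ Λ`. -/
def closure (G : SimpleGraph V) [DecidableRel G.Adj] (Λ : Finset V) : Finset V :=
  Λ ∪ extBoundary G Λ

/-- `∇ᵢ H` evaluated on a configuration on `A` (well defined for `i ∈ Λ`, `A = Λ̄`, since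
then `∇ᵢ H` only depends on the spins in `Λ̄`). -/
noncomputable def gradH (A : Finset V) (H : Config V → ℝ) (i : V) (y : SubConfig A) : ℝ :=
  H (flip (extendC A y) i) - H (extendC A y)

/-- Expectation `ν(f)` of an observable `f` supported in `A` under a distribution `ν` on
`Σ^A`. -/
noncomputable def lexp {A : Finset V} (ν : SubConfig A → ℝ) (f : Config V → ℝ) : ℝ :=
  ∑ y : SubConfig A, ν y * f (extendC A y)

/-- The DLR linear program: distributions on `Σ^{Λ̄}` satisfying the local spin-flip
equations `ν(y) = ν(yⁱ) e^{∇ᵢH(y)}` for all `y` and `i ∈ Λ`. -/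
def LPdlr (G : SimpleGraph V) [DecidableRel G.Adj] (H : Config V → ℝ) (Λ : Finset V) :
    Set (SubConfig (closure G Λ) → ℝ) :=
  {ν | IsDist ν ∧ ∀ y, ∀ i ∈ Λ,
      ν y = ν (flipAt (closure G Λ) y i) * Real.exp (gradH (closure G Λ) H i y)}

/-- Values `ν(f)` over feasible points `ν` of the DLR linear program. -/
def dlrVals (G : SimpleGraph V) [DecidableRel G.Adj] (H : Config V → ℝ) (Λ : Finset V)
    (f : Config V → ℝ) : Set ℝ :=
  {t | ∃ ν ∈ LPdlr G H Λ, t = lexp ν f}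

/-- Marginal of a distribution `μ` on `Σ^V` on the sites in `A`. -/
noncomputable def marg (A : Finset V) (μ : Config V → ℝ) : SubConfig A → ℝ :=
  fun y => ∑ x : Config V, if restrict A x = y then μ x else 0

/-- The Hamiltonian truncated to `Λ` with boundary condition `η` on `∂ᵉˣ Λ`. -/
noncomputable def hamLoc (G : SimpleGraph V) [DecidableRel G.Adj] (β : ℝ)
    (h : V → V → Bool → Bool → ℝ) (Λ : Finset V)
    (η : SubConfig (extBoundary G Λ)) (x : SubConfig Λ) : ℝ :=
  β * ((1 : ℝ) / 2 * (∑ i ∈ Λ.attach, ∑ j ∈ Λ.attach,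
        if G.Adj i.1 j.1 then h i.1 j.1 (x i) (x j) else 0)
    + ∑ i ∈ Λ.attach, ∑ j ∈ (extBoundary G Λ).attach,
        if G.Adj i.1 j.1 then h i.1 j.1 (x i) (η j) else 0)

/-- The local Gibbs state `μ_Λ^η` on `Λ` with boundary condition `η`. -/
noncomputable def gibbsLoc (G : SimpleGraph V) [DecidableRel G.Adj] (β : ℝ)
    (h : V → V → Bool → Bool → ℝ) (Λ : Finset V)
    (η : SubConfig (extBoundary G Λ)) (x : SubConfig Λ) : ℝ :=
  Real.exp (-(hamLoc G β h Λ η x)) /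
    ∑ x' : SubConfig Λ, Real.exp (-(hamLoc G β h Λ η x'))

/-- Expectation `μ_Λ^η(f)` of an observable supported in `Λ` under the local Gibbs state. -/
noncomputable def gibbsLocExp (G : SimpleGraph V) [DecidableRel G.Adj] (β : ℝ)
    (h : V → V → Bool → Bool → ℝ) (Λ : Finset V)
    (η : SubConfig (extBoundary G Λ)) (f : Config V → ℝ) : ℝ :=
  ∑ x : SubConfig Λ, gibbsLoc G β h Λ η x * f (extendC Λ x)

/-- Combine `x ∈ Σ^Λ` and `η ∈ Σ^{∂ᵉˣΛ}` into a configuration `(x, η) ∈ Σ^{Λ̄}`. -/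
def glue (G : SimpleGraph V) [DecidableRel G.Adj] (Λ : Finset V)
    (x : SubConfig Λ) (η : SubConfig (extBoundary G Λ)) : SubConfig (closure G Λ) :=
  fun i => if h : i.1 ∈ Λ then x ⟨i.1, h⟩
    else η ⟨i.1, by
      have hi := i.2
      simp only [closure, Finset.mem_union] at hi
      tauto⟩

/-- A local (single-site, finite-range, bounded-rate) Markov chain on `Σ^V`. -/
structure IsLocalMC (G : SimpleGraph V) (P : Config V → Config V → ℝ) : Prop where
  nonneg : ∀ x x', 0 ≤ P x x'
  rowSum : ∀ x, ∑ x', P x x' = 1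
  /-- `P_{x,x'} = 0` if `x'` differs from `x` on more than one site. -/
  singleSite : ∀ x x', x' ≠ x → (∀ i, x' ≠ flip x i) → P x x' = 0
  /-- `P_{x,xⁱ}` only depends on the spins in the closed neighborhood of `i`. -/
  locality : ∀ i : V, ∀ x x' : Config V, x i = x' i →
      (∀ j, G.Adj i j → x j = x' j) → P x (flip x i) = P x' (flip x' i)
  /-- `P_{x,x'} ≤ 1/n` off the diagonal. -/
  bounded : ∀ x x', x ≠ x' → P x x' ≤ 1 / (Fintype.card V : ℝ)

/-- The Markov-chain linear program: distributions on `Σ^{Λ̄}` satisfying the stationarity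
equations `ν(Pg) = ν(g)` for all `g` supported on `Λ`. -/
def LPmc (G : SimpleGraph V) [DecidableRel G.Adj] (P : Config V → Config V → ℝ)
    (Λ : Finset V) : Set (SubConfig (closure G Λ) → ℝ) :=
  {ν | IsDist ν ∧ ∀ g : Config V → ℝ, SupportedOn g ↑Λ →
      lexp ν ((Matrix.of P).mulVec g) = lexp ν g}

/-- Values `ν(f)` over feasible points `ν` of the Markov-chain linear program. -/
def mcVals (G : SimpleGraph V) [DecidableRel G.Adj] (P : Config V → Config V → ℝ)
    (Λ : Finset V) (f : Config V → ℝ) : Set ℝ :=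
  {t | ∃ ν ∈ LPmc G P Λ, t = lexp ν f}

/-- The heat-bath dynamics: site `i` is flipped with probability
`c(i,x) = e^{-∇ᵢH(x)} / (1 + e^{-∇ᵢH(x)})`, each site being selected with probability `1/n`. -/
noncomputable def heatBath (H : Config V → ℝ) (x x' : Config V) : ℝ :=
  if x' = x then
    1 - (∑ i : V, Real.exp (-(grad H i x)) / (1 + Real.exp (-(grad H i x)))) /
      (Fintype.card V : ℝ)
  else
    ∑ i : V, if x' = flip x i then
      (Real.exp (-(grad H i x)) / (1 + Real.exp (-(grad H i x)))) / (Fintype.card V : ℝ)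
    else 0

/-- Marginal on `Σ^A` of a distribution on `Σ^B`, for `A ⊆ B`. -/
noncomputable def margTo {A B : Finset V} (hAB : A ⊆ B) (ν : SubConfig B → ℝ) :
    SubConfig A → ℝ :=
  fun z => ∑ y : SubConfig B,
    if (fun i : {i : V // i ∈ A} => y ⟨i.1, hAB i.2⟩) = z then ν y else 0

theorem closure_mono (G : SimpleGraph V) [DecidableRel G.Adj] {Λ Λ' : Finset V}
    (hs : Λ ⊆ Λ') : closure G Λ ⊆ closure G Λ' := by
  intro j hj
  simp only [closure, Finset.mem_union, extBoundary, Finset.mem_filter, Finset.mem_univ,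
    true_and] at hj ⊢
  by_cases hjΛ' : j ∈ Λ'
  · exact Or.inl hjΛ'
  · rcases hj with hj | ⟨hjn, i, hiΛ, hadj⟩
    · exact absurd (hs hj) hjΛ'
    · exact Or.inr ⟨hjΛ', i, hs hiΛ, hadj⟩

lemma flip_apply' (x : Config V) (i k : V) : flip x i k = if k = i then !x i else x k := by
  simp [flip, Function.update_apply]

lemma bool_not_eq {a b : Bool} (h : a ≠ b) : (!a) = b := by
  cases a <;> cases b <;> simp_all

lemma eq_on_compl {f : Config V → ℝ} {S : Set V} (hf : SupportedOn f S) :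
    ∀ (D : Finset V) (x x' : Config V), (∀ i, x i ≠ x' i → i ∈ D ∧ i ∉ S) → f x = f x' := by
  intro D
  induction D using Finset.induction_on with
  | empty =>
    intro x x' hd
    have hxx : x = x' := funext fun i => by
      by_contra hne
      exact absurd (hd i hne).1 (Finset.notMem_empty i)
    rw [hxx]
  | @insert a D' _ ih =>
    intro x x' hd
    by_cases hxa : x a = x' a
    · refine ih x x' fun i hne => ⟨?_, (hd i hne).2⟩
      rcases Finset.mem_insert.mp (hd i hne).1 with rfl | hmem
      · exact absurd hxa hne
      · exact hmem
    · have haS : a ∉ S := (hd a hxa).2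
      have h1 : f (flip x a) = f x := hf a haS x
      rw [← h1]
      refine ih (flip x a) x' fun i hne => ?_
      have hia : i ≠ a := by
        rintro rfl
        apply hne
        rw [flip_apply', if_pos rfl]
        exact bool_not_eq hxa
      have hxi : x i ≠ x' i := by
        rwa [flip_apply', if_neg hia] at hne
      refine ⟨?_, (hd i hxi).2⟩
      rcases Finset.mem_insert.mp (hd i hxi).1 with rfl | hmem
      · exact absurd rfl hia
      · exact hmem

lemma supportedOn_congr {f : Config V → ℝ} {S : Set V} (hf : SupportedOn f S)
    {x x' : Config V} (hagree : ∀ i ∈ S, x i = x' i) : f x = f x' :=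
  eq_on_compl hf Finset.univ x x' fun i hne =>
    ⟨Finset.mem_univ i, fun hiS => hne (hagree i hiS)⟩

lemma ham_flip_expand (G : SimpleGraph V) [DecidableRel G.Adj] (β : ℝ)
    (h : V → V → Bool → Bool → ℝ) (i : V) (z : Config V) :
    ham G β h (flip z i) - ham G β h z
      = β * (1/2 * ∑ k : V, ∑ j : V,
          ((if G.Adj k j then h k j (flip z i k) (flip z i j) else 0) -
           (if G.Adj k j then h k j (z k) (z j) else 0))) := by
  simp only [ham, Finset.sum_sub_distrib]
  ring

lemma ham_flip_local (G : SimpleGraph V) [DecidableRel G.Adj] (β : ℝ)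
    (h : V → V → Bool → Bool → ℝ) (i : V) {x x' : Config V}
    (hi : x i = x' i) (hnb : ∀ j, G.Adj i j → x j = x' j) :
    ham G β h (flip x i) - ham G β h x = ham G β h (flip x' i) - ham G β h x' := by
  have key : ∀ k j : V,
      (if G.Adj k j then h k j (flip x i k) (flip x i j) else 0) -
        (if G.Adj k j then h k j (x k) (x j) else 0) =
      (if G.Adj k j then h k j (flip x' i k) (flip x' i j) else 0) -
        (if G.Adj k j then h k j (x' k) (x' j) else 0) := by
    intro k j
    by_cases hadj : G.Adj k j
    · simp only [if_pos hadj]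
      by_cases hk : k = i
      · by_cases hj : j = i
        · subst hk; subst hj; exact absurd hadj (G.irrefl)
        · subst hk
          have hj' : x j = x' j := hnb j hadj
          simp [flip_apply', hj, hi, hj']
      · by_cases hj : j = i
        · subst hj
          have hk' : x k = x' k := hnb k (G.adj_symm hadj)
          simp [flip_apply', hk, hi, hk']
        · simp [flip_apply', hk, hj]
    · simp [hadj]
  rw [ham_flip_expand, ham_flip_expand]
  refine congrArg _ (congrArg _ ?_)
  exact Finset.sum_congr rfl fun k _ => Finset.sum_congr rfl fun j _ => key k j

lemma flipAt_invol (A : Finset V) (i : V) :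
    Function.Involutive (fun z : SubConfig A => flipAt A z i) := by
  intro z
  funext j
  by_cases hj : (j : V) = i <;> simp [flipAt, hj]

lemma gradH_margTo (G : SimpleGraph V) [DecidableRel G.Adj] (β : ℝ)
    (h : V → V → Bool → Bool → ℝ) {Λ Λ' : Finset V} (hΛ : Λ ⊆ Λ') {i : V} (hi : i ∈ Λ)
    (y' : SubConfig (closure G Λ')) :
    gradH (closure G Λ) (ham G β h) i
        (fun k => y' ⟨k.1, closure_mono G hΛ k.2⟩)
      = gradH (closure G Λ') (ham G β h) i y' := by
  unfold gradH
  apply ham_flip_local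
  · have hiA : i ∈ closure G Λ := Finset.mem_union_left _ hi
    have hiB : i ∈ closure G Λ' := closure_mono G hΛ hiA
    simp [extendC, hiA, hiB]
  · intro j hadj
    have hjA : j ∈ closure G Λ := by
      simp only [closure, Finset.mem_union, extBoundary, Finset.mem_filter, Finset.mem_univ,
        true_and]
      by_cases hj : j ∈ Λ
      · exact Or.inl hj
      · exact Or.inr ⟨hj, i, hi, hadj⟩
    have hjB : j ∈ closure G Λ' := closure_mono G hΛ hjA
    simp [extendC, hjA, hjB]

lemma margTo_mem_LPdlr (G : SimpleGraph V) [DecidableRel G.Adj] (β : ℝ)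
    (h : V → V → Bool → Bool → ℝ) {Λ Λ' : Finset V} (hΛ : Λ ⊆ Λ')
    {ν' : SubConfig (closure G Λ') → ℝ} (hν' : ν' ∈ LPdlr G (ham G β h) Λ') :
    margTo (closure_mono G hΛ) ν' ∈ LPdlr G (ham G β h) Λ := by
  obtain ⟨⟨hpos, hsum⟩, hdlr⟩ := hν'
  refine ⟨⟨?_, ?_⟩, ?_⟩
  · intro y
    refine Finset.sum_nonneg fun y' _ => ?_
    split
    · exact hpos y'
    · exact le_refl 0
  · unfold margTo
    rw [Finset.sum_comm]
    rw [← hsum]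
    refine Finset.sum_congr rfl fun y' _ => ?_
    simp [Finset.sum_ite_eq]
  · intro y i hiΛ
    have hiΛ' : i ∈ Λ' := hΛ hiΛ
    have hflipB := flipAt_invol (closure G Λ') i
    have hflipA := flipAt_invol (closure G Λ) i
    have hr_flip : ∀ y' : SubConfig (closure G Λ'),
        (fun k : {k : V // k ∈ closure G Λ} =>
            flipAt (closure G Λ') y' i ⟨k.1, closure_mono G hΛ k.2⟩)
          = flipAt (closure G Λ) (fun k => y' ⟨k.1, closure_mono G hΛ k.2⟩) i :=
      fun y' => rfl
    unfold margTo
    rw [Finset.sum_mul]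
    refine Fintype.sum_bijective _ hflipB.bijective _ _ fun y' => ?_
    rw [hr_flip y']
    by_cases hc : (fun k : {k : V // k ∈ closure G Λ} => y' ⟨k.1, closure_mono G hΛ k.2⟩) = y
    · rw [if_pos hc, if_pos (by rw [hc]), hdlr y' i hiΛ',
        ← gradH_margTo G β h hΛ hiΛ y', hc]
    · rw [if_neg hc, if_neg (fun hh => hc (hflipA.injective hh)), zero_mul]

lemma lexp_margTo (G : SimpleGraph V) [DecidableRel G.Adj] {Λ Λ' : Finset V} (hΛ : Λ ⊆ Λ')
    (ν' : SubConfig (closure G Λ') → ℝ) (f : Config V → ℝ) (hf : SupportedOn f ↑Λ) :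
    lexp (margTo (closure_mono G hΛ) ν') f = lexp ν' f := by
  unfold lexp margTo
  simp only [Finset.sum_mul, ite_mul, zero_mul]
  rw [Finset.sum_comm]
  refine Finset.sum_congr rfl fun y' _ => ?_
  rw [Finset.sum_ite_eq]
  simp only [Finset.mem_univ, if_true]
  congr 1
  apply supportedOn_congr hf
  intro k hk
  have hkΛ : k ∈ Λ := hk
  have hkA : k ∈ closure G Λ := Finset.mem_union_left _ hkΛ
  have hkB : k ∈ closure G Λ' := closure_mono G hΛ hkA
  simp [extendC, hkA, hkB]

lemma lexp_abs_le {A : Finset V} {ν : SubConfig A → ℝ} (hν : IsDist ν) (f : Config V → ℝ) :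
    |lexp ν f| ≤ ∑ z : SubConfig A, |f (extendC A z)| := by
  unfold lexp
  refine (Finset.abs_sum_le_sum_abs _ _).trans ?_
  refine Finset.sum_le_sum fun z _ => ?_
  rw [abs_mul, abs_of_nonneg (hν.1 z)]
  have hle1 : ν z ≤ 1 := by
    rw [← hν.2]
    exact Finset.single_le_sum (fun a _ => hν.1 a) (Finset.mem_univ z)
  exact mul_le_of_le_one_left (abs_nonneg _) hle1

/-- Monotonicity of the DLR hierarchy: if `Λ ⊆ Λ'` and
`ν' ∈ LP_{Λ',DLR}`, then the marginal of `ν'` on `Σ^{Λ̄}` belongs to `LP_{Λ,DLR}`.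
Consequently the optimal values are nested. -/
theorem LPdlr_monotone (G : SimpleGraph V) [DecidableRel G.Adj]
    (β : ℝ) (hβ : 0 ≤ β) (h : V → V → Bool → Bool → ℝ)
    (hsym : ∀ i j a b, h i j a b = h i j b a) (hsym' : ∀ i j, h i j = h j i)
    (Λ Λ' : Finset V) (hΛ : Λ ⊆ Λ')
    (ν' : SubConfig (closure G Λ') → ℝ) (hν' : ν' ∈ LPdlr G (ham G β h) Λ') :
    margTo (closure_mono G hΛ) ν' ∈ LPdlr G (ham G β h) Λ ∧
    ∀ f : Config V → ℝ, SupportedOn f ↑Λ →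
      sInf (dlrVals G (ham G β h) Λ f) ≤ sInf (dlrVals G (ham G β h) Λ' f) ∧
      sSup (dlrVals G (ham G β h) Λ' f) ≤ sSup (dlrVals G (ham G β h) Λ f) := by
  refine ⟨margTo_mem_LPdlr G β h hΛ hν', fun f hf => ?_⟩
  have hsub : dlrVals G (ham G β h) Λ' f ⊆ dlrVals G (ham G β h) Λ f := by
    rintro t ⟨μ, hμ, rfl⟩
    exact ⟨margTo (closure_mono G hΛ) μ, margTo_mem_LPdlr G β h hΛ hμ,
      (lexp_margTo G hΛ μ f hf).symm⟩
  have hne : (dlrVals G (ham G β h) Λ' f).Nonempty := ⟨lexp ν' f, ν', hν', rfl⟩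
  have hbb : BddBelow (dlrVals G (ham G β h) Λ f) := by
    refine ⟨-(∑ z : SubConfig (closure G Λ), |f (extendC (closure G Λ) z)|), ?_⟩
    rintro t ⟨μ, hμ, rfl⟩
    exact (abs_le.mp (lexp_abs_le hμ.1 f)).1
  have hba : BddAbove (dlrVals G (ham G β h) Λ f) := by
    refine ⟨∑ z : SubConfig (closure G Λ), |f (extendC (closure G Λ) z)|, ?_⟩
    rintro t ⟨μ, hμ, rfl⟩
    exact (abs_le.mp (lexp_abs_le hμ.1 f)).2
  exact ⟨csInf_le_csInf hbb hne hsub, csSup_le_csSup hba hne hsub⟩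

end GibbsLP
end

section
/- Let P be a local Markov chain with stationary distribution μ (μP = μ), where μ is the Gibbs distribution. Then for every Λ ⊆ V, the marginal μ_{Λ̄} of μ on Σ^{Λ̄} belongs to LP_{Λ,MC}; consequently, for every f supported on Λ, min{ν(f) : ν ∈ LP_{Λ,MC}} ≤ μ(f) ≤ max{ν(f) : ν ∈ LP_{Λ,MC}}. -/
namespace GibbsLP

variable {V : Type*} [Fintype V] [DecidableEq V]

lemma flip_apply_self (x : Config V) (i : V) : flip x i i = !x i := by
  simp [flip]

lemma flip_apply_ne (x : Config V) {i j : V} (hji : j ≠ i) : flip x i j = x j := by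
  simp [flip, Function.update_of_ne hji]

lemma flip_comm' (x : Config V) {i j : V} (hij : i ≠ j) :
    flip (flip x i) j = flip (flip x j) i := by
  unfold flip
  rw [Function.update_of_ne hij.symm, Function.update_of_ne hij, Function.update_comm hij]

lemma supportedOn_congr_aux {f : Config V → ℝ} {A : Set V} (hf : SupportedOn f A) :
    ∀ (s : Finset V) (x x' : Config V), (∀ i, x i ≠ x' i → i ∈ s ∧ i ∉ A) →
      f x = f x' := by
  intro s
  induction s using Finset.induction_on with
  | empty =>
    intro x x' hd
    congr 1
    funext i
    by_contra hne
    simpa using (hd i hne).1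
  | @insert a s ha ih =>
    intro x x' hd
    by_cases hxa : x a = x' a
    · refine ih x x' fun i hi => ⟨?_, (hd i hi).2⟩
      rcases Finset.mem_insert.mp (hd i hi).1 with rfl | hs
      · exact absurd hxa hi
      · exact hs
    · have haA : a ∉ A := (hd a hxa).2
      have h1 : f x = f (flip x a) := (hf a haA x).symm
      rw [h1]
      refine ih (flip x a) x' fun i hi => ?_
      by_cases hia : i = a
      · subst hia
        exfalso
        apply hi
        have hx' : x' i = !x i := by
          cases hx1 : x i <;> cases hx2 : x' i <;> simp_all
        rw [flip_apply_self, hx']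
      · have hxi : x i ≠ x' i := by rwa [flip_apply_ne x hia] at hi
        exact ⟨(Finset.mem_insert.mp (hd i hxi).1).resolve_left hia, (hd i hxi).2⟩

lemma supportedOn_eq {f : Config V → ℝ} {A : Set V} (hf : SupportedOn f A)
    {x x' : Config V} (hxx : ∀ i ∈ A, x i = x' i) : f x = f x' :=
  supportedOn_congr_aux hf Finset.univ x x'
    fun i hi => ⟨Finset.mem_univ i, fun hA => hi (hxx i hA)⟩

lemma supportedOn_mono {f : Config V → ℝ} {A B : Set V} (hAB : A ⊆ B)
    (hf : SupportedOn f A) : SupportedOn f B := fun i hi => hf i fun hi' => hi (hAB hi')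

lemma f_extend_restrict {f : Config V → ℝ} {A : Finset V} (hf : SupportedOn f ↑A)
    (x : Config V) : f (extendC A (restrict A x)) = f x :=
  supportedOn_eq hf fun i hi => by
    have : i ∈ A := hi
    simp [extendC, restrict, this]

lemma lexp_marg {A : Finset V} {f : Config V → ℝ} (hf : SupportedOn f ↑A)
    (μ : Config V → ℝ) : lexp (marg A μ) f = ∑ x, μ x * f x := by
  unfold lexp marg
  simp_rw [Finset.sum_mul, ite_mul, zero_mul]
  rw [Finset.sum_comm]
  refine Finset.sum_congr rfl fun x _ => ?_
  rw [Finset.sum_ite_eq, if_pos (Finset.mem_univ _), f_extend_restrict hf x]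

lemma marg_sum (A : Finset V) (μ : Config V → ℝ) :
    ∑ y, marg A μ y = ∑ x, μ x := by
  unfold marg
  rw [Finset.sum_comm]
  refine Finset.sum_congr rfl fun x _ => ?_
  rw [Finset.sum_ite_eq, if_pos (Finset.mem_univ _)]

lemma gibbs_nonneg (H : Config V → ℝ) (x : Config V) : 0 ≤ gibbs H x :=
  div_nonneg (Real.exp_nonneg _) (Finset.sum_nonneg fun _ _ => (Real.exp_pos _).le)

lemma gibbs_sum (H : Config V → ℝ) : ∑ x, gibbs H x = 1 := by
  unfold gibbs
  rw [← Finset.sum_div]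
  exact div_self (ne_of_gt (Finset.sum_pos (fun y _ => Real.exp_pos _) Finset.univ_nonempty))

lemma mulVec_apply (P : Config V → Config V → ℝ) (g : Config V → ℝ) (x : Config V) :
    (Matrix.of P).mulVec g x = ∑ x', P x x' * g x' := rfl

lemma Pg_decomp {G : SimpleGraph V} {P : Config V → Config V → ℝ} (hP : IsLocalMC G P)
    (g : Config V → ℝ) (x : Config V) :
    (Matrix.of P).mulVec g x = g x + ∑ j : V, P x (flip x j) * (g (flip x j) - g x) := by
  have hinj : ∀ j ∈ Finset.univ (α := V), ∀ j' ∈ Finset.univ (α := V),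
      flip x j = flip x j' → j = j' := by
    intro j _ j' _ hjj
    by_contra hne
    have h1 := congrFun hjj j
    rw [flip_apply_self, flip_apply_ne x hne] at h1
    simp at h1
  have himg : ∑ x' ∈ Finset.univ.image (flip x), P x x' * (g x' - g x)
      = ∑ x', P x x' * (g x' - g x) := by
    refine Finset.sum_subset (Finset.subset_univ _) ?_
    intro x' _ hx'
    by_cases hxx : x' = x
    · subst hxx; simp
    · rw [hP.singleSite x x' hxx, zero_mul]
      intro j hj
      exact hx' (Finset.mem_image.mpr ⟨j, Finset.mem_univ j, hj.symm⟩)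
  calc (Matrix.of P).mulVec g x = ∑ x', P x x' * g x' := mulVec_apply P g x
    _ = ∑ x', (P x x' * g x + P x x' * (g x' - g x)) :=
        Finset.sum_congr rfl fun x' _ => by ring
    _ = (∑ x', P x x') * g x + ∑ x', P x x' * (g x' - g x) := by
        rw [Finset.sum_add_distrib, Finset.sum_mul]
    _ = g x + ∑ x', P x x' * (g x' - g x) := by rw [hP.rowSum x, one_mul]
    _ = g x + ∑ j : V, P x (flip x j) * (g (flip x j) - g x) := by
        rw [← himg, Finset.sum_image hinj]

lemma Pg_supported {G : SimpleGraph V} [DecidableRel G.Adj] {P : Config V → Config V → ℝ}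
    (hP : IsLocalMC G P) {g : Config V → ℝ} {Λ : Finset V} (hg : SupportedOn g ↑Λ) :
    SupportedOn ((Matrix.of P).mulVec g) ↑(closure G Λ) := by
  intro i hi x
  have hic : i ∉ closure G Λ := fun hmem => hi (Finset.mem_coe.mpr hmem)
  have hiΛ : i ∉ Λ := fun hmem => hic (Finset.mem_union_left _ hmem)
  have hiΛ' : i ∉ (↑Λ : Set V) := fun hmem => hiΛ hmem
  have hib : ∀ j ∈ Λ, ¬ G.Adj j i := by
    intro j hj hadj
    refine hic (Finset.mem_union_right _ ?_)
    simp only [extBoundary, Finset.mem_filter, Finset.mem_univ, true_and]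
    exact ⟨hiΛ, j, hj, hadj⟩
  have hgx : g (flip x i) = g x := hg i hiΛ' x
  rw [Pg_decomp hP, Pg_decomp hP, hgx]
  congr 1
  refine Finset.sum_congr rfl fun j _ => ?_
  by_cases hjΛ : j ∈ Λ
  · have hij : i ≠ j := fun hcontra => hiΛ (hcontra ▸ hjΛ)
    have hPloc : P x (flip x j) = P (flip x i) (flip (flip x i) j) := by
      refine hP.locality j x (flip x i) (flip_apply_ne x hij.symm).symm ?_
      intro k hadj
      by_cases hki : k = i
      · exact absurd (hki ▸ hadj) (hib j hjΛ)
      · exact (flip_apply_ne x hki).symm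
    have hg1 : g (flip (flip x i) j) = g (flip x j) := by
      rw [flip_comm' x hij, hg i hiΛ' (flip x j)]
    rw [hPloc, hg1]
  · have hjΛ' : j ∉ (↑Λ : Set V) := fun hmem => hjΛ hmem
    have h1 : g (flip (flip x i) j) = g (flip x i) := hg j hjΛ' _
    have h2 : g (flip x j) = g x := hg j hjΛ' _
    rw [h1, h2, hgx]
    ring

/-- If `P` is a local Markov chain with stationary distribution the Gibbs
distribution `μ`, then the marginal of `μ` on `Σ^{Λ̄}` belongs to `LP_{Λ,MC}`;
consequently the MC linear program sandwiches `μ(f)` for every `f` supported on `Λ`. -/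
theorem gibbs_marginal_mem_LPmc (G : SimpleGraph V) [DecidableRel G.Adj]
    (β : ℝ) (hβ : 0 ≤ β) (h : V → V → Bool → Bool → ℝ)
    (hsym : ∀ i j a b, h i j a b = h i j b a) (hsym' : ∀ i j, h i j = h j i)
    (P : Config V → Config V → ℝ) (hP : IsLocalMC G P)
    (hstat : ∀ x' : Config V,
      ∑ x : Config V, gibbs (ham G β h) x * P x x' = gibbs (ham G β h) x')
    (Λ : Finset V) :
    marg (closure G Λ) (gibbs (ham G β h)) ∈ LPmc G P Λ ∧
    ∀ f : Config V → ℝ, SupportedOn f ↑Λ →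
      sInf (mcVals G P Λ f) ≤ ∑ x : Config V, gibbs (ham G β h) x * f x ∧
      ∑ x : Config V, gibbs (ham G β h) x * f x ≤ sSup (mcVals G P Λ f) := by
  set μ := gibbs (ham G β h) with hμdef
  have hμ0 : ∀ x, 0 ≤ μ x := gibbs_nonneg _
  have hμ1 : ∑ x, μ x = 1 := gibbs_sum _
  set A := closure G Λ with hAdef
  have hsub : (↑Λ : Set V) ⊆ ↑A := by
    intro i hi
    exact Finset.mem_coe.mpr (Finset.mem_union_left _ (Finset.mem_coe.mp hi))
  have hmem : marg A μ ∈ LPmc G P Λ := by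
    refine ⟨⟨fun y => Finset.sum_nonneg fun x _ => ?_, by rw [marg_sum, hμ1]⟩, ?_⟩
    · by_cases hre : restrict A x = y <;> simp [hre, hμ0 x]
    · intro g hg
      have hgA : SupportedOn g ↑A := supportedOn_mono hsub hg
      have hPgA : SupportedOn ((Matrix.of P).mulVec g) ↑A := Pg_supported hP hg
      rw [lexp_marg hPgA, lexp_marg hgA]
      simp_rw [mulVec_apply, Finset.mul_sum]
      rw [Finset.sum_comm]
      refine Finset.sum_congr rfl fun x' _ => ?_
      calc ∑ x, μ x * (P x x' * g x') = (∑ x, μ x * P x x') * g x' := by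
            rw [Finset.sum_mul]
            exact Finset.sum_congr rfl fun x _ => by ring
        _ = μ x' * g x' := by rw [hstat x']
  refine ⟨hmem, fun f hf => ?_⟩
  have hfA : SupportedOn f ↑A := supportedOn_mono hsub hf
  have hmemval : (∑ x, μ x * f x) ∈ mcVals G P Λ f :=
    ⟨marg A μ, hmem, (lexp_marg hfA μ).symm⟩
  set C := ∑ y : SubConfig A, |f (extendC A y)| with hCdef
  have hC : ∀ t ∈ mcVals G P Λ f, |t| ≤ C := by
    rintro t ⟨ν, ⟨⟨hν0, hν1⟩, -⟩, rfl⟩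
    calc |lexp ν f| ≤ ∑ y, |ν y * f (extendC A y)| := Finset.abs_sum_le_sum_abs _ _
      _ ≤ C := by
          refine Finset.sum_le_sum fun y _ => ?_
          rw [abs_mul, abs_of_nonneg (hν0 y)]
          have hle1 : ν y ≤ 1 :=
            hν1 ▸ Finset.single_le_sum (fun z _ => hν0 z) (Finset.mem_univ y)
          exact mul_le_of_le_one_left (abs_nonneg _) hle1
  exact ⟨csInf_le ⟨-C, fun t ht => (abs_le.mp (hC t ht)).1⟩ hmemval,
    le_csSup ⟨C, fun t ht => (abs_le.mp (hC t ht)).2⟩ hmemval⟩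

end GibbsLP
end
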